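/- For every odd natural number n, there exists a simple graph G on a vertex type of cardinality 2^n such that G is twin-free and the F2-rank of G is at most n + 1. -/

import Mathlib

namespace Stmt17Aux

variable (m : ℕ)

/-- even index 2k -/
def av (k : Fin m) : Fin (2*m+1) := ⟨2*k, by have := k.isLt; omega⟩
/-- odd index 2k+1 -/
def bv (k : Fin m) : Fin (2*m+1) := ⟨2*k+1, by have := k.isLt; omega⟩
/-- last index 2m -/
def lv : Fin (2*m+1) := ⟨2*m, by omega⟩

/-- the bilinear-ish form -/
def g (x y : Fin (2*m+1) → ZMod 2) : ZMod 2 :=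
  (∑ k : Fin m, x (av m k) * y (bv m k)) + (∑ k : Fin m, x (bv m k) * y (av m k))
    + x (lv m) + y (lv m)

variable {m}

lemma g_comm (x y : Fin (2*m+1) → ZMod 2) : g m x y = g m y x := by
  unfold g
  have h1 : (∑ k : Fin m, x (av m k) * y (bv m k)) = ∑ k : Fin m, y (bv m k) * x (av m k) := by
    exact Finset.sum_congr rfl fun k _ => mul_comm _ _
  have h2 : (∑ k : Fin m, x (bv m k) * y (av m k)) = ∑ k : Fin m, y (av m k) * x (bv m k) := by
    exact Finset.sum_congr rfl fun k _ => mul_comm _ _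
  rw [h1, h2]; ring

lemma g_self (x : Fin (2*m+1) → ZMod 2) : g m x x = 0 := by
  unfold g
  have h2 : (∑ k : Fin m, x (bv m k) * x (av m k)) = ∑ k : Fin m, x (av m k) * x (bv m k) := by
    exact Finset.sum_congr rfl fun k _ => mul_comm _ _
  rw [h2]
  have : ∀ t s : ZMod 2, t + t + s + s = 0 := by decide
  exact this _ _

lemma g_zero (x : Fin (2*m+1) → ZMod 2) : g m x 0 = x (lv m) := by
  simp [g]

lemma bv_ne_av (k j : Fin m) : av m j ≠ bv m k := by
  simp [av, bv, Fin.ext_iff]; omega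

lemma lv_ne_bv (k : Fin m) : lv m ≠ bv m k := by
  have := k.isLt; simp [lv, bv, Fin.ext_iff]; omega

lemma lv_ne_av (k : Fin m) : lv m ≠ av m k := by
  have := k.isLt; simp [lv, av, Fin.ext_iff]; omega

lemma bv_eq_iff (k j : Fin m) : bv m j = bv m k ↔ j = k := by
  simp [bv, Fin.ext_iff]

lemma av_eq_iff (k j : Fin m) : av m j = av m k ↔ j = k := by
  simp [av, Fin.ext_iff]

lemma g_single_b (x : Fin (2*m+1) → ZMod 2) (k0 : Fin m) :
    g m x (Pi.single (bv m k0) 1) = x (av m k0) + x (lv m) := by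
  unfold g
  rw [Pi.single_apply]
  simp only [Pi.single_apply, bv_eq_iff, mul_ite, mul_one, mul_zero]
  rw [if_neg (lv_ne_bv k0)]
  have h2 : (∑ k : Fin m, if av m k = bv m k0 then x (bv m k) else 0) = 0 := by
    apply Finset.sum_eq_zero; intro k _
    rw [if_neg (bv_ne_av k0 k)]
  rw [h2, Finset.sum_ite_eq' Finset.univ k0 (fun k => x (av m k))]
  simp

lemma g_single_a (x : Fin (2*m+1) → ZMod 2) (k0 : Fin m) :
    g m x (Pi.single (av m k0) 1) = x (bv m k0) + x (lv m) := by
  unfold g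
  rw [Pi.single_apply]
  simp only [Pi.single_apply, av_eq_iff, mul_ite, mul_one, mul_zero]
  rw [if_neg (lv_ne_av k0)]
  have h1 : (∑ k : Fin m, if bv m k = av m k0 then x (av m k) else 0) = 0 := by
    apply Finset.sum_eq_zero; intro k _
    rw [if_neg (Ne.symm (bv_ne_av k k0) : bv m k ≠ av m k0)]
  rw [h1, Finset.sum_ite_eq' Finset.univ k0 (fun k => x (bv m k))]
  simp

lemma eq_of_rows {x y : Fin (2*m+1) → ZMod 2} (H : ∀ z, g m x z = g m y z) : x = y := by
  have hl : x (lv m) = y (lv m) := by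
    have := H 0; rwa [g_zero, g_zero] at this
  have ha : ∀ k, x (av m k) = y (av m k) := by
    intro k
    have := H (Pi.single (bv m k) 1)
    rw [g_single_b, g_single_b, hl] at this
    exact add_right_cancel this
  have hb : ∀ k, x (bv m k) = y (bv m k) := by
    intro k
    have := H (Pi.single (av m k) 1)
    rw [g_single_a, g_single_a, hl] at this
    exact add_right_cancel this
  funext i
  rcases Nat.lt_or_ge i.val (2*m) with h | h
  · rcases Nat.even_or_odd i.val with ⟨t, ht⟩ | ⟨t, ht⟩
    · have htm : t < m := by omega
      have hi : i = av m ⟨t, htm⟩ := by simp [av, Fin.ext_iff]; omega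
      rw [hi]; exact ha _
    · have htm : t < m := by omega
      have hi : i = bv m ⟨t, htm⟩ := by simp [bv, Fin.ext_iff]; omega
      rw [hi]; exact hb _
  · have hi : i = lv m := by have := i.isLt; simp [lv, Fin.ext_iff]; omega
    rw [hi]; exact hl

end Stmt17Aux

/-- For every odd natural number `n`, there exists a simple graph `G` on a vertex type of
cardinality `2^n` such that `G` is twin-free and the `F2`-rank of `G` is at most `n + 1`. -/
theorem stmt_17 (n : ℕ) (hn : Odd n) :
    ∃ (G : SimpleGraph (Fin (2 ^ n))) (_ : DecidableRel G.Adj),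
      (∀ u v : Fin (2 ^ n), G.neighborSet u = G.neighborSet v → u = v) ∧
      (G.adjMatrix (ZMod 2)).rank ≤ n + 1 := by
  classical
  obtain ⟨m, rfl⟩ := hn
  set n := 2*m+1 with hn'
  open Stmt17Aux in
  have hcard : Fintype.card (Fin n → ZMod 2) = Fintype.card (Fin (2 ^ n)) := by simp
  let e : Fin (2 ^ n) ≃ (Fin n → ZMod 2) := (Fintype.equivOfCardEq hcard).symm
  let G : SimpleGraph (Fin (2 ^ n)) :=
    { Adj := fun u v => u ≠ v ∧ g m (e u) (e v) = 1
      symm := by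
        constructor
        intro u v ⟨h1, h2⟩
        exact ⟨h1.symm, by rwa [g_comm]⟩
      loopless := ⟨fun u ⟨h1, _⟩ => h1 rfl⟩ }
  have hAdj : ∀ u v, G.Adj u v ↔ (u ≠ v ∧ g m (e u) (e v) = 1) := fun u v => Iff.rfl
  letI instG : DecidableRel G.Adj := Classical.decRel _
  refine ⟨G, instG, ?_, ?_⟩
  · -- twin-free
    intro u v huv
    by_cases h : u = v
    · exact h
    · exfalso
      have hAdj' : ∀ w, G.Adj u w ↔ G.Adj v w := by
        intro w
        constructor <;> intro hw
        · have : w ∈ G.neighborSet u := hw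
          rw [huv] at this; exact this
        · have : w ∈ G.neighborSet v := hw
          rw [← huv] at this; exact this
      have hnadj : g m (e u) (e v) = 0 := by
        have : ¬ G.Adj v v := G.loopless.irrefl v
        rw [← hAdj' v] at this
        rw [hAdj] at this
        push_neg at this
        have h2 := this h
        revert h2; generalize g m (e u) (e v) = t; revert t; decide
      have key : ∀ z : Fin n → ZMod 2, g m (e u) z = g m (e v) z := by
        intro z
        obtain ⟨w, rfl⟩ : ∃ w, e w = z := ⟨e.symm z, e.apply_symm_apply z⟩
        by_cases hwu : w = u
        · subst hwu
          rw [g_self, g_comm]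
          exact hnadj.symm
        · by_cases hwv : w = v
          · subst hwv
            rw [g_self]
            exact hnadj
          · have := hAdj' w
            rw [hAdj, hAdj] at this
            have h1 : (g m (e u) (e w) = 1) ↔ (g m (e v) (e w) = 1) := by
              constructor
              · intro hg; exact ((this.mp ⟨Ne.symm hwu, hg⟩)).2
              · intro hg; exact ((this.mpr ⟨Ne.symm hwv, hg⟩)).2
            revert h1; generalize g m (e u) (e w) = t; generalize g m (e v) (e w) = s
            revert t s; decide
      have := eq_of_rows key
      exact h (e.injective this)
  · -- rank bound
    let C := (Fin m ⊕ Fin m) ⊕ (Fin 1 ⊕ Fin 1)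
    let P : Matrix (Fin (2 ^ n)) C (ZMod 2) := fun u c =>
      match c with
      | .inl (.inl k) => e u (av m k)
      | .inl (.inr k) => e u (bv m k)
      | .inr (.inl _) => e u (lv m)
      | .inr (.inr _) => 1
    let Q : Matrix C (Fin (2 ^ n)) (ZMod 2) := fun c v =>
      match c with
      | .inl (.inl k) => e v (bv m k)
      | .inl (.inr k) => e v (av m k)
      | .inr (.inl _) => 1
      | .inr (.inr _) => e v (lv m)
    have hM : G.adjMatrix (ZMod 2) = P * Q := by
      ext u v
      rw [SimpleGraph.adjMatrix_apply, Matrix.mul_apply]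
      have hPQ : (∑ c : C, P u c * Q c v) = g m (e u) (e v) := by
        show (∑ c : (Fin m ⊕ Fin m) ⊕ (Fin 1 ⊕ Fin 1), P u c * Q c v) = _
        rw [Fintype.sum_sum_type, Fintype.sum_sum_type, Fintype.sum_sum_type]
        simp only [P, Q, Fin.sum_univ_one, mul_one, one_mul]
        unfold g
        ring
      rw [hPQ]
      by_cases h : u = v
      · subst h
        rw [if_neg (G.loopless.irrefl u), g_self]
      · by_cases hg : g m (e u) (e v) = 1
        · rw [if_pos (hAdj u v |>.mpr ⟨h, hg⟩), hg]
        · rw [if_neg (fun hc => hg ((hAdj u v).mp hc).2)]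
          revert hg; generalize g m (e u) (e v) = t; revert t; decide
    rw [hM]
    refine le_trans (Matrix.rank_mul_le_left P Q) (le_trans (Matrix.rank_le_card_width P) ?_)
    have : Fintype.card C = 2*m + 2 := by simp [C]; omega
    omega
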